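/- arXiv:2007.03636 — 5 statements merged into one kernel-verified Lean document; each statement's English description precedes it below -/
import Mathlib

section
/- For every integer r ≥ 1, the path P_{3r+1} on 3r+1 vertices is not an r-letter graph; that is, there is no alphabet Σ of size r, decoder D ⊆ Σ², and word w over Σ with Γ_D(w) isomorphic to P_{3r+1}. Consequently ℓ(P_{3r+1}) ≥ r+1. -/
/-- The letter graph `Γ_D(w)` of a word `w = w₁…wₙ` (positions indexed by `Fin n`) over an
alphabet `α` with decoder `D ⊆ α × α`: distinct positions `i < j` are adjacent
iff `(w i, w j) ∈ D`. -/
def letterGraph {α : Type*} {n : ℕ} (D : α → α → Prop) (w : Fin n → α) :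
    SimpleGraph (Fin n) where
  Adj i j := (i < j ∧ D (w i) (w j)) ∨ (j < i ∧ D (w j) (w i))
  symm := by
    constructor
    intro i j h
    rcases h with h | h
    · exact Or.inr h
    · exact Or.inl h
  loopless := by
    constructor
    intro i h
    rcases h with ⟨h, -⟩ | ⟨h, -⟩ <;> exact absurd h (lt_irrefl i)

/-- A graph `G` is a `k`-letter graph if it is isomorphic to the letter graph of some
word over an alphabet of size `k` (we take the alphabet to be `Fin k`). -/
def IsKLetterGraph (k : ℕ) {V : Type*} (G : SimpleGraph V) : Prop :=
  ∃ (n : ℕ) (D : Fin k → Fin k → Prop) (w : Fin n → Fin k),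
    Nonempty (G ≃g letterGraph D w)

/-- The lettericity of a graph: the least `k` such that `G` is a `k`-letter graph. -/
noncomputable def lettericity {V : Type*} (G : SimpleGraph V) : ℕ :=
  sInf {k | IsKLetterGraph k G}

/-- The graph `rK₂`: the disjoint union of `r` edges (a perfect matching on `2r`
vertices), the edges being `{2t, 2t+1}` for `0 ≤ t < r`. -/
def matchingGraph (r : ℕ) : SimpleGraph (Fin (2 * r)) where
  Adj i j := i ≠ j ∧ (i : ℕ) / 2 = (j : ℕ) / 2
  symm := by
    constructor
    intro i j h
    exact ⟨h.1.symm, h.2.symm⟩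
  loopless := by
    constructor
    intro i h
    exact h.1 rfl


/-- Adjacency relation of a letter graph, as a bare predicate. -/
def LAdj {r N : ℕ} (D : Fin r → Fin r → Prop) (w : Fin N → Fin r) (x y : Fin N) : Prop :=
  (x < y ∧ D (w x) (w y)) ∨ (y < x ∧ D (w y) (w x))

lemma letterGraph_adj {r N : ℕ} (D : Fin r → Fin r → Prop) (w : Fin N → Fin r) (x y : Fin N) :
    (letterGraph D w).Adj x y ↔ LAdj D w x y := Iff.rfl

/-- Interface: `ψ` maps word positions to path positions. -/
structure Iface {r N : ℕ} (D : Fin r → Fin r → Prop) (w : Fin N → Fin r) (ψ : Fin N → ℕ) :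
    Prop where
  inj : ∀ x y : Fin N, ψ x = ψ y → x = y
  lt : ∀ x, ψ x < N
  surj : ∀ m, m < N → ∃ x, ψ x = m
  adj : ∀ x y, LAdj D w x y ↔ ψ x + 1 = ψ y ∨ ψ y + 1 = ψ x

namespace Path3r

variable {r N : ℕ} {D : Fin r → Fin r → Prop} {w : Fin N → Fin r} {ψ : Fin N → ℕ}

lemma ladj_symm {x y : Fin N} (h : LAdj D w x y) : LAdj D w y x := by
  rcases h with h | h
  · exact Or.inr h
  · exact Or.inl h

lemma D_of_ladj {x y : Fin N} (h : LAdj D w x y) (hxy : x < y) : D (w x) (w y) := by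
  rcases h with ⟨_, hD⟩ | ⟨h', _⟩
  · exact hD
  · exact absurd hxy (lt_asymm h')

lemma ladj_irrefl (hI : Iface D w ψ) (x : Fin N) : ¬ LAdj D w x x := by
  intro h
  have := (hI.adj x x).1 h
  omega

lemma two_nbrs (hI : Iface D w ψ) {z a b c : Fin N} (hab : a ≠ b) (hac : a ≠ c) (hbc : b ≠ c)
    (h1 : LAdj D w z a) (h2 : LAdj D w z b) (h3 : LAdj D w z c) : False := by
  have e1 := (hI.adj z a).1 h1
  have e2 := (hI.adj z b).1 h2
  have e3 := (hI.adj z c).1 h3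
  have n1 : ψ a ≠ ψ b := fun h => hab (hI.inj _ _ h)
  have n2 : ψ a ≠ ψ c := fun h => hac (hI.inj _ _ h)
  have n3 : ψ b ≠ ψ c := fun h => hbc (hI.inj _ _ h)
  omega

lemma c4 (hI : Iface D w ψ) {x y a b : Fin N} (hxy : x ≠ y) (hab : a ≠ b)
    (h1 : LAdj D w x a) (h2 : LAdj D w x b) (h3 : LAdj D w y a) (h4 : LAdj D w y b) : False := by
  have e1 := (hI.adj x a).1 h1
  have e2 := (hI.adj x b).1 h2
  have e3 := (hI.adj y a).1 h3
  have e4 := (hI.adj y b).1 h4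
  have n1 : ψ x ≠ ψ y := fun h => hxy (hI.inj _ _ h)
  have n2 : ψ a ≠ ψ b := fun h => hab (hI.inj _ _ h)
  omega

lemma noDll (hI : Iface D w ψ) {l : Fin r} {m1 m2 m3 : Fin N} (h12 : m1 < m2) (h23 : m2 < m3)
    (hw1 : w m1 = l) (hw2 : w m2 = l) (hw3 : w m3 = l) : ¬ D l l := by
  intro hD
  have e1 : LAdj D w m1 m2 := Or.inl ⟨h12, by rw [hw1, hw2]; exact hD⟩
  have e2 : LAdj D w m1 m3 := Or.inl ⟨h12.trans h23, by rw [hw1, hw3]; exact hD⟩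
  have e3 : LAdj D w m2 m3 := Or.inl ⟨h23, by rw [hw2, hw3]; exact hD⟩
  have f1 := (hI.adj _ _).1 e1
  have f2 := (hI.adj _ _).1 e2
  have f3 := (hI.adj _ _).1 e3
  omega

lemma exists_sorted {k : ℕ} {M : Fin r}
    (h : k ≤ (Finset.univ.filter (fun x => w x = M)).card) :
    ∃ y : Fin k → Fin N, StrictMono y ∧ ∀ i, w (y i) = M := by
  obtain ⟨t, hts, htc⟩ := Finset.exists_subset_card_eq h
  exact ⟨t.orderEmbOfFin htc, (t.orderEmbOfFin htc).strictMono, fun i =>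
    (Finset.mem_filter.1 (hts (t.orderEmbOfFin_mem htc i))).2⟩

lemma exists_triple {M : Fin r}
    (h : (Finset.univ.filter (fun x => w x = M)).card = 3) :
    ∃ m1 m2 m3 : Fin N, m1 < m2 ∧ m2 < m3 ∧ w m1 = M ∧ w m2 = M ∧ w m3 = M ∧
      ∀ z, w z = M → z = m1 ∨ z = m2 ∨ z = m3 := by
  set s := Finset.univ.filter (fun x => w x = M) with hs
  refine ⟨s.orderEmbOfFin h ⟨0, by omega⟩, s.orderEmbOfFin h ⟨1, by omega⟩,
    s.orderEmbOfFin h ⟨2, by omega⟩, ?_, ?_, ?_, ?_, ?_, ?_⟩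
  · exact (s.orderEmbOfFin h).strictMono (Fin.mk_lt_mk.mpr (by omega))
  · exact (s.orderEmbOfFin h).strictMono (Fin.mk_lt_mk.mpr (by omega))
  · exact (Finset.mem_filter.1 (s.orderEmbOfFin_mem h _)).2
  · exact (Finset.mem_filter.1 (s.orderEmbOfFin_mem h _)).2
  · exact (Finset.mem_filter.1 (s.orderEmbOfFin_mem h _)).2
  · intro z hz
    have hz' : z ∈ Set.range (s.orderEmbOfFin h) := by
      rw [Finset.range_orderEmbOfFin]
      simp [hs, hz]
    obtain ⟨⟨iv, hiv⟩, hi⟩ := hz'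
    interval_cases iv
    · exact Or.inl hi.symm
    · exact Or.inr (Or.inl hi.symm)
    · exact Or.inr (Or.inr hi.symm)

lemma exists_quad {M : Fin r}
    (h : (Finset.univ.filter (fun x => w x = M)).card = 4) :
    ∃ m1 m2 m3 m4 : Fin N, m1 < m2 ∧ m2 < m3 ∧ m3 < m4 ∧
      w m1 = M ∧ w m2 = M ∧ w m3 = M ∧ w m4 = M ∧
      ∀ z, w z = M → z = m1 ∨ z = m2 ∨ z = m3 ∨ z = m4 := by
  set s := Finset.univ.filter (fun x => w x = M) with hs
  refine ⟨s.orderEmbOfFin h ⟨0, by omega⟩, s.orderEmbOfFin h ⟨1, by omega⟩,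
    s.orderEmbOfFin h ⟨2, by omega⟩, s.orderEmbOfFin h ⟨3, by omega⟩,
    ?_, ?_, ?_, ?_, ?_, ?_, ?_, ?_⟩
  · exact (s.orderEmbOfFin h).strictMono (Fin.mk_lt_mk.mpr (by omega))
  · exact (s.orderEmbOfFin h).strictMono (Fin.mk_lt_mk.mpr (by omega))
  · exact (s.orderEmbOfFin h).strictMono (Fin.mk_lt_mk.mpr (by omega))
  · exact (Finset.mem_filter.1 (s.orderEmbOfFin_mem h _)).2
  · exact (Finset.mem_filter.1 (s.orderEmbOfFin_mem h _)).2
  · exact (Finset.mem_filter.1 (s.orderEmbOfFin_mem h _)).2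
  · exact (Finset.mem_filter.1 (s.orderEmbOfFin_mem h _)).2
  · intro z hz
    have hz' : z ∈ Set.range (s.orderEmbOfFin h) := by
      rw [Finset.range_orderEmbOfFin]
      simp [hs, hz]
    obtain ⟨⟨iv, hiv⟩, hi⟩ := hz'
    interval_cases iv
    · exact Or.inl hi.symm
    · exact Or.inr (Or.inl hi.symm)
    · exact Or.inr (Or.inr (Or.inl hi.symm))
    · exact Or.inr (Or.inr (Or.inr hi.symm))



section Quad
variable {a : Fin r} {x1 x2 x3 x4 : Fin N}

lemma nbrs2 (hI : Iface D w ψ) (h12 : x1 < x2) (h23 : x2 < x3) (h34 : x3 < x4)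
    (hw1 : w x1 = a) (hw2 : w x2 = a) (hw3 : w x3 = a) (hw4 : w x4 = a) (hDaa : ¬ D a a) :
    ∀ z, LAdj D w x2 z → LAdj D w x1 z ∧ x2 < z ∧ z < x3 := by
  intro z hz
  rcases lt_trichotomy z x2 with h | h | h
  · exfalso
    have hD : D (w z) a := by have := D_of_ladj (ladj_symm hz) h; rwa [hw2] at this
    have h3 : LAdj D w z x3 := Or.inl ⟨h.trans h23, by rw [hw3]; exact hD⟩
    have h4 : LAdj D w z x4 := Or.inl ⟨(h.trans h23).trans h34, by rw [hw4]; exact hD⟩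
    exact two_nbrs hI (ne_of_lt h23) (ne_of_lt (h23.trans h34)) (ne_of_lt h34)
      (ladj_symm hz) h3 h4
  · exact absurd (h ▸ hz) (ladj_irrefl hI x2)
  · have hD : D a (w z) := by have := D_of_ladj hz h; rwa [hw2] at this
    have h1 : LAdj D w x1 z := Or.inl ⟨h12.trans h, by rw [hw1]; exact hD⟩
    refine ⟨h1, h, ?_⟩
    rcases lt_trichotomy z x3 with h' | h' | h'
    · exact h'
    · exfalso; apply hDaa; rw [h', hw3] at hD; exact hD
    · exfalso
      have h3 : LAdj D w x3 z := Or.inl ⟨h', by rw [hw3]; exact hD⟩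
      exact two_nbrs hI (ne_of_lt h12) (ne_of_lt (h12.trans h23)) (ne_of_lt h23)
        (ladj_symm h1) (ladj_symm hz) (ladj_symm h3)

lemma nbrs3 (hI : Iface D w ψ) (h12 : x1 < x2) (h23 : x2 < x3) (h34 : x3 < x4)
    (hw1 : w x1 = a) (hw2 : w x2 = a) (hw3 : w x3 = a) (hw4 : w x4 = a) (hDaa : ¬ D a a) :
    ∀ z, LAdj D w x3 z → x2 < z ∧ z < x3 ∧ LAdj D w z x4 := by
  intro z hz
  rcases lt_trichotomy z x3 with h | h | h
  · have hD : D (w z) a := by have := D_of_ladj (ladj_symm hz) h; rwa [hw3] at this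
    have h4 : LAdj D w z x4 := Or.inl ⟨h.trans h34, by rw [hw4]; exact hD⟩
    refine ⟨?_, h, h4⟩
    rcases lt_trichotomy z x2 with h' | h' | h'
    · exfalso
      have h2 : LAdj D w z x2 := Or.inl ⟨h', by rw [hw2]; exact hD⟩
      exact two_nbrs hI (ne_of_lt h23) (ne_of_lt (h23.trans h34)) (ne_of_lt h34)
        h2 (ladj_symm hz) h4
    · exfalso; apply hDaa; rw [h', hw2] at hD; exact hD
    · exact h'
  · exact absurd (h ▸ hz) (ladj_irrefl hI x3)
  · exfalso
    have hD : D a (w z) := by have := D_of_ladj hz h; rwa [hw3] at this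
    have h1 : LAdj D w x1 z := Or.inl ⟨(h12.trans h23).trans h, by rw [hw1]; exact hD⟩
    have h2 : LAdj D w x2 z := Or.inl ⟨h23.trans h, by rw [hw2]; exact hD⟩
    exact two_nbrs hI (ne_of_lt h12) (ne_of_lt (h12.trans h23)) (ne_of_lt h23)
      (ladj_symm h1) (ladj_symm h2) (ladj_symm hz)

lemma endpoint2 (hI : Iface D w ψ) (h12 : x1 < x2) (h23 : x2 < x3) (h34 : x3 < x4)
    (hw1 : w x1 = a) (hw2 : w x2 = a) (hw3 : w x3 = a) (hw4 : w x4 = a) (hDaa : ¬ D a a) :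
    ψ x2 = 0 ∨ ψ x2 = N - 1 := by
  by_contra hcon
  push_neg at hcon
  obtain ⟨h0, h1⟩ := hcon
  have hx2N := hI.lt x2
  obtain ⟨z, hz⟩ := hI.surj (ψ x2 - 1) (by omega)
  obtain ⟨z', hz'⟩ := hI.surj (ψ x2 + 1) (by omega)
  have hA : LAdj D w x2 z := (hI.adj _ _).2 (by omega)
  have hA' : LAdj D w x2 z' := (hI.adj _ _).2 (by omega)
  have hzz : z ≠ z' := fun h => by rw [h] at hz; omega
  obtain ⟨e1, -, -⟩ := nbrs2 hI h12 h23 h34 hw1 hw2 hw3 hw4 hDaa z hA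
  obtain ⟨e1', -, -⟩ := nbrs2 hI h12 h23 h34 hw1 hw2 hw3 hw4 hDaa z' hA'
  exact c4 hI hzz (ne_of_lt h12) (ladj_symm e1) (ladj_symm hA) (ladj_symm e1') (ladj_symm hA')

lemma endpoint3 (hI : Iface D w ψ) (h12 : x1 < x2) (h23 : x2 < x3) (h34 : x3 < x4)
    (hw1 : w x1 = a) (hw2 : w x2 = a) (hw3 : w x3 = a) (hw4 : w x4 = a) (hDaa : ¬ D a a) :
    ψ x3 = 0 ∨ ψ x3 = N - 1 := by
  by_contra hcon
  push_neg at hcon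
  obtain ⟨h0, h1⟩ := hcon
  have hx3N := hI.lt x3
  obtain ⟨z, hz⟩ := hI.surj (ψ x3 - 1) (by omega)
  obtain ⟨z', hz'⟩ := hI.surj (ψ x3 + 1) (by omega)
  have hA : LAdj D w x3 z := (hI.adj _ _).2 (by omega)
  have hA' : LAdj D w x3 z' := (hI.adj _ _).2 (by omega)
  have hzz : z ≠ z' := fun h => by rw [h] at hz; omega
  obtain ⟨-, -, e4⟩ := nbrs3 hI h12 h23 h34 hw1 hw2 hw3 hw4 hDaa z hA
  obtain ⟨-, -, e4'⟩ := nbrs3 hI h12 h23 h34 hw1 hw2 hw3 hw4 hDaa z' hA'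
  exact c4 hI hzz (ne_of_lt h34) (ladj_symm hA) e4 (ladj_symm hA') e4'

end Quad

lemma no5 (hI : Iface D w ψ) {l : Fin r} {y : Fin 5 → Fin N}
    (hm : StrictMono y) (hw : ∀ i, w (y i) = l) : False := by
  have h01 : y 0 < y 1 := hm (by decide)
  have h12 : y 1 < y 2 := hm (by decide)
  have h23 : y 2 < y 3 := hm (by decide)
  have h34 : y 3 < y 4 := hm (by decide)
  have hDll : ¬ D l l := noDll hI h01 h12 (hw 0) (hw 1) (hw 2)
  have hN : 5 ≤ N := by
    have : (y 4 : ℕ) < N := (y 4).isLt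
    have v01 : (y 0 : ℕ) < (y 1 : ℕ) := h01
    have v12 : (y 1 : ℕ) < (y 2 : ℕ) := h12
    have v23 : (y 2 : ℕ) < (y 3 : ℕ) := h23
    have v34 : (y 3 : ℕ) < (y 4 : ℕ) := h34
    omega
  have hex : ∃ z, LAdj D w (y 2) z := by
    rcases Nat.eq_zero_or_pos (ψ (y 2)) with h0 | hpos
    · obtain ⟨z, hz⟩ := hI.surj 1 (by omega)
      exact ⟨z, (hI.adj _ _).2 (by omega)⟩
    · have := hI.lt (y 2)
      obtain ⟨z, hz⟩ := hI.surj (ψ (y 2) - 1) (by omega)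
      exact ⟨z, (hI.adj _ _).2 (by omega)⟩
  obtain ⟨z, hz⟩ := hex
  rcases lt_trichotomy z (y 2) with h | h | h
  · have hD : D (w z) l := by have := D_of_ladj (ladj_symm hz) h; rwa [hw 2] at this
    have e3 : LAdj D w z (y 3) := Or.inl ⟨h.trans h23, by rw [hw 3]; exact hD⟩
    have e4 : LAdj D w z (y 4) := Or.inl ⟨(h.trans h23).trans h34, by rw [hw 4]; exact hD⟩
    exact two_nbrs hI (ne_of_lt h23) (ne_of_lt (h23.trans h34)) (ne_of_lt h34)
      (ladj_symm hz) e3 e4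
  · exact absurd (h ▸ hz) (ladj_irrefl hI (y 2))
  · have hD : D l (w z) := by have := D_of_ladj hz h; rwa [hw 2] at this
    have e0 : LAdj D w (y 0) z := Or.inl ⟨(h01.trans h12).trans h, by rw [hw 0]; exact hD⟩
    have e1 : LAdj D w (y 1) z := Or.inl ⟨h12.trans h, by rw [hw 1]; exact hD⟩
    exact two_nbrs hI (ne_of_lt h01) (ne_of_lt (h01.trans h12)) (ne_of_lt h12)
      (ladj_symm e0) (ladj_symm e1) (ladj_symm hz)

lemma window (hI : Iface D w ψ) {a M : Fin r} {x2 x3 m1 m2 m3 : Fin N}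
    (hwx2 : w x2 = a) (hwx3 : w x3 = a) (hpx2 : ψ x2 = 0) (hpx3 : ψ x3 = N - 1)
    (hMa : M ≠ a) (h12 : m1 < m2) (h23 : m2 < m3)
    (hw1 : w m1 = M) (hw2 : w m2 = M) (hw3 : w m3 = M) :
    (ψ m1 + 2 = ψ m2 ∧ ψ m3 = ψ m2 + 2) ∨ (ψ m3 + 2 = ψ m2 ∧ ψ m1 = ψ m2 + 2) := by
  have hDMM : ¬ D M M := noDll hI h12 h23 hw1 hw2 hw3
  have hne0 : ψ m2 ≠ 0 := by
    intro h
    exact hMa (by rw [← hw2, hI.inj m2 x2 (by omega), hwx2])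
  have hneN : ψ m2 ≠ N - 1 := by
    intro h
    exact hMa (by rw [← hw2, hI.inj m2 x3 (by omega), hwx3])
  have hm2N : ψ m2 < N := hI.lt m2
  obtain ⟨z, hz⟩ := hI.surj (ψ m2 - 1) (by omega)
  obtain ⟨z', hz'⟩ := hI.surj (ψ m2 + 1) (by omega)
  have hA : LAdj D w m2 z := (hI.adj _ _).2 (by omega)
  have hA' : LAdj D w m2 z' := (hI.adj _ _).2 (by omega)
  have hzz : z ≠ z' := fun h => by rw [h] at hz; omega
  have hside : ∀ x, LAdj D w m2 x →
      (m1 < x ∧ x < m2 ∧ LAdj D w x m3) ∨ (m2 < x ∧ x < m3 ∧ LAdj D w m1 x) := by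
    intro x hAx
    rcases lt_trichotomy x m2 with h | h | h
    · left
      have hD : D (w x) M := by have := D_of_ladj (ladj_symm hAx) h; rwa [hw2] at this
      have hA3 : LAdj D w x m3 := Or.inl ⟨h.trans h23, by rw [hw3]; exact hD⟩
      refine ⟨?_, h, hA3⟩
      rcases lt_trichotomy x m1 with h' | h' | h'
      · exfalso
        have hA1 : LAdj D w x m1 := Or.inl ⟨h', by rw [hw1]; exact hD⟩
        exact two_nbrs hI (ne_of_lt h12) (ne_of_lt (h12.trans h23)) (ne_of_lt h23)
          hA1 (ladj_symm hAx) hA3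
      · exfalso; apply hDMM; rw [h', hw1] at hD; exact hD
      · exact h'
    · exact absurd (h ▸ hAx) (ladj_irrefl hI m2)
    · right
      have hD : D M (w x) := by have := D_of_ladj hAx h; rwa [hw2] at this
      have hA1 : LAdj D w m1 x := Or.inl ⟨(h12.trans h), by rw [hw1]; exact hD⟩
      refine ⟨h, ?_, hA1⟩
      rcases lt_trichotomy x m3 with h' | h' | h'
      · exact h'
      · exfalso; apply hDMM; rw [h', hw3] at hD; exact hD
      · exfalso
        have hA3 : LAdj D w m3 x := Or.inl ⟨h', by rw [hw3]; exact hD⟩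
        exact two_nbrs hI (ne_of_lt h12) (ne_of_lt (h12.trans h23)) (ne_of_lt h23)
          (ladj_symm hA1) (ladj_symm hAx) (ladj_symm hA3)
  have hne12 : ψ m1 ≠ ψ m2 := fun h => (ne_of_lt h12) (hI.inj _ _ h)
  have hne23 : ψ m2 ≠ ψ m3 := fun h => (ne_of_lt h23) (hI.inj _ _ h)
  rcases hside z hA with ⟨hz1, hz2, hz3⟩ | ⟨hz1, hz2, hz3⟩ <;>
    rcases hside z' hA' with ⟨hz1', hz2', hz3'⟩ | ⟨hz1', hz2', hz3'⟩
  · exact absurd (c4 hI hzz (ne_of_lt h23) (ladj_symm hA) hz3 (ladj_symm hA') hz3') (by simp)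
  · have f1 := (hI.adj _ _).1 hz3
    have f2 := (hI.adj _ _).1 hz3'
    right
    omega
  · have f1 := (hI.adj _ _).1 hz3
    have f2 := (hI.adj _ _).1 hz3'
    left
    omega
  · exact absurd (c4 hI hzz (ne_of_lt h12) (ladj_symm hz3) (ladj_symm hA)
      (ladj_symm hz3') (ladj_symm hA')) (by simp)

/-- Chain invariant: the letter occupying path positions `3k+1, 3k+3, 3k+5`. -/
def Pred {r N : ℕ} (w : Fin N → Fin r) (ψ : Fin N → ℕ) (a : Fin r) (x1 : Fin N) (k : ℕ) :
    Prop :=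
  ∃ (L : Fin r) (glo gmid ghi : Fin N),
    w glo = L ∧ w gmid = L ∧ w ghi = L ∧ L ≠ a ∧
    glo < gmid ∧ gmid < ghi ∧
    ψ ghi = 3*k+1 ∧ ψ gmid = 3*k+3 ∧ ψ glo = 3*k+5 ∧ glo < x1

lemma core0 (hI : Iface D w ψ) (hr : 2 ≤ r) (hN : N = 3 * r + 1)
    {a : Fin r} {x1 x2 x3 x4 : Fin N}
    (h12 : x1 < x2) (h23 : x2 < x3) (h34 : x3 < x4)
    (hw1 : w x1 = a) (hw2 : w x2 = a) (hw3 : w x3 = a) (hw4 : w x4 = a)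
    (hafib : ∀ z, w z = a → z = x1 ∨ z = x2 ∨ z = x3 ∨ z = x4)
    (hall : ∀ b, b ≠ a → (Finset.univ.filter (fun x => w x = b)).card = 3)
    (hpx2 : ψ x2 = 0) : False := by
  have hDaa : ¬ D a a := noDll hI h12 h23 hw1 hw2 hw3
  have hN7 : 7 ≤ N := by omega
  have hpx3 : ψ x3 = N - 1 := by
    rcases endpoint3 hI h12 h23 h34 hw1 hw2 hw3 hw4 hDaa with h | h
    · exact absurd (hI.inj x3 x2 (by omega)) (ne_of_gt h23)
    · exact h
  obtain ⟨u, hu⟩ := hI.surj 1 (by omega)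
  have hAx2u : LAdj D w x2 u := (hI.adj _ _).2 (by omega)
  obtain ⟨hAx1u, hx2u, hux3⟩ := nbrs2 hI h12 h23 h34 hw1 hw2 hw3 hw4 hDaa u hAx2u
  have hpx1 : ψ x1 = 2 := by
    have hne0 : ψ x1 ≠ 0 := fun h => (ne_of_lt h12) (hI.inj x1 x2 (by omega))
    have := (hI.adj _ _).1 hAx1u
    omega
  obtain ⟨v, hv⟩ := hI.surj 3 (by omega)
  have hAx1v : LAdj D w x1 v := (hI.adj _ _).2 (by omega)
  have hnbrx1 : ∀ z, LAdj D w x1 z → z = u ∨ z = v := by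
    intro z hz
    have := (hI.adj _ _).1 hz
    have h13 : ψ z = 1 ∨ ψ z = 3 := by omega
    rcases h13 with h | h
    · exact Or.inl (hI.inj _ _ (by omega))
    · exact Or.inr (hI.inj _ _ (by omega))
  have hDab : D a (w u) := by
    have := D_of_ladj hAx1u (h12.trans hx2u)
    rwa [hw1] at this
  have hba : w u ≠ a := by
    intro h
    rcases hafib u h with h' | h' | h' | h'
    · rw [h'] at hx2u; exact absurd h12 (lt_asymm hx2u)
    · rw [h'] at hx2u; exact lt_irrefl _ hx2u
    · rw [h'] at hux3; exact lt_irrefl _ hux3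
    · rw [h'] at hux3; exact absurd hux3 (lt_asymm h34)
  obtain ⟨m1, m2, m3, hm12, hm23, hb1, hb2, hb3, hbcov⟩ := exists_triple (hall _ hba)
  have hwin := window hI hw2 hw3 hpx2 hpx3 hba hm12 hm23 hb1 hb2 hb3
  have hbase : Pred w ψ a x1 0 := by
    rcases hbcov u rfl with h | h | h
    · exfalso
      have hpm1 : ψ m1 = 1 := by rw [← h]; exact hu
      have hps : ψ m2 = 3 ∧ ψ m3 = 5 := by
        rcases hwin with ⟨e1, e2⟩ | ⟨e1, e2⟩ <;> omega
      have hx2m1 : x2 < m1 := h ▸ hx2u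
      have hx1m3 : x1 < m3 := h12.trans (hx2m1.trans (hm12.trans hm23))
      have hA : LAdj D w x1 m3 := Or.inl ⟨hx1m3, by rw [hw1, hb3]; exact hDab⟩
      rcases hnbrx1 m3 hA with h' | h'
      · have h5 := hps.2; rw [h'] at h5; omega
      · have h5 := hps.2; rw [h'] at h5; omega
    · exfalso
      have hpm2 : ψ m2 = 1 := by rw [← h]; exact hu
      rcases hwin with ⟨e1, e2⟩ | ⟨e1, e2⟩ <;> omega
    · have hpm3 : ψ m3 = 1 := by rw [← h]; exact hu
      have hps : ψ m2 = 3 ∧ ψ m1 = 5 := by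
        rcases hwin with ⟨e1, e2⟩ | ⟨e1, e2⟩ <;> omega
      have hm1x1 : m1 < x1 := by
        rcases lt_trichotomy m1 x1 with h' | h' | h'
        · exact h'
        · exfalso; exact hba (by rw [← hb1, h', hw1])
        · exfalso
          have hA : LAdj D w x1 m1 := Or.inl ⟨h', by rw [hw1, hb1]; exact hDab⟩
          rcases hnbrx1 m1 hA with h'' | h''
          · have h5 := hps.2; rw [h''] at h5; omega
          · have h5 := hps.2; rw [h''] at h5; omega
      exact ⟨w u, m1, m2, m3, hb1, hb2, hb3, hba, hm12, hm23,
        (by omega), (by omega), (by omega), hm1x1⟩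
  have hstep : ∀ k, Pred w ψ a x1 k → 3*k+8 < N → Pred w ψ a x1 (k+1) := by
    rintro k ⟨L, glo, gmid, ghi, hwlo, hwmid, hwhi, hLa, hlomid, hmidhi, hphi, hpmid, hplo,
      hlox1⟩ hk
    obtain ⟨z, hz⟩ := hI.surj (3*k+4) (by omega)
    have hAzmid : LAdj D w z gmid := (hI.adj _ _).2 (by omega)
    have hAzlo : LAdj D w z glo := (hI.adj _ _).2 (by omega)
    have hnAzhi : ¬ LAdj D w z ghi := by
      intro h; have := (hI.adj _ _).1 h; omega
    have hmidz : gmid < z := by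
      rcases lt_trichotomy z gmid with h | h | h
      · exfalso
        have hD : D (w z) L := by have := D_of_ladj hAzmid h; rwa [hwmid] at this
        exact hnAzhi (Or.inl ⟨h.trans hmidhi, by rw [hwhi]; exact hD⟩)
      · exfalso; exact (ladj_irrefl hI gmid) (h ▸ hAzmid)
      · exact h
    have hDLz : D L (w z) := by
      have := D_of_ladj (ladj_symm hAzmid) hmidz
      rwa [hwmid] at this
    have hzhi : z < ghi := by
      rcases lt_trichotomy z ghi with h | h | h
      · exact h
      · exfalso; rw [h] at hz; omega
      · exfalso
        exact hnAzhi (ladj_symm (Or.inl ⟨h, by rw [hwhi]; exact hDLz⟩))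
    have hnDzL : ¬ D (w z) L := by
      intro hD
      exact hnAzhi (Or.inl ⟨hzhi, by rw [hwhi]; exact hD⟩)
    have hML : w z ≠ L := by
      intro h
      have hDLL : D L L := by rw [h] at hDLz; exact hDLz
      have hA : LAdj D w glo gmid := Or.inl ⟨hlomid, by rw [hwlo, hwmid]; exact hDLL⟩
      have := (hI.adj _ _).1 hA
      omega
    have hMa : w z ≠ a := by
      intro h
      rcases hafib z h with h' | h' | h' | h'
      · rw [h'] at hz; omega
      · rw [h'] at hz; omega
      · rw [h'] at hz; omega
      · have hDLa : D L a := by rw [h] at hDLz; exact hDLz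
        have hA1 : LAdj D w glo x2 := Or.inl ⟨hlox1.trans h12, by rw [hwlo, hw2]; exact hDLa⟩
        have := (hI.adj _ _).1 hA1
        omega
    obtain ⟨n1, n2, n3, hn12, hn23, hnw1, hnw2, hnw3, hncov⟩ := exists_triple (hall _ hMa)
    have hwinM := window hI hw2 hw3 hpx2 hpx3 hMa hn12 hn23 hnw1 hnw2 hnw3
    have hno32 : ∀ x, w x = w z → ψ x = 3*k+2 → False := by
      intro x hxM hxp
      have hAxhi : LAdj D w x ghi := (hI.adj _ _).2 (by omega)
      rcases lt_trichotomy x ghi with h | h | h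
      · have hD := D_of_ladj hAxhi h
        rw [hxM, hwhi] at hD
        exact hnDzL hD
      · rw [h] at hxM
        exact hML (hxM.symm.trans hwhi)
      · have hA : LAdj D w glo x :=
          Or.inl ⟨(hlomid.trans hmidhi).trans h, by rw [hwlo, hxM]; exact hDLz⟩
        have := (hI.adj _ _).1 hA
        omega
    have hgood : ∃ y t, ψ y = 3*k+6 ∧ ψ t = 3*k+8 ∧ w y = w z ∧ w t = w z := by
      rcases hncov z rfl with h | h | h
      · have hpn1 : ψ n1 = 3*k+4 := by rw [← h]; exact hz
        rcases hwinM with ⟨e1, e2⟩ | ⟨e1, e2⟩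
        · exact ⟨n2, n3, by omega, by omega, hnw2, hnw3⟩
        · exact absurd (hno32 n2 hnw2 (by omega)) (by simp)
      · have hpn2 : ψ n2 = 3*k+4 := by rw [← h]; exact hz
        rcases hwinM with ⟨e1, e2⟩ | ⟨e1, e2⟩
        · exact absurd (hno32 n1 hnw1 (by omega)) (by simp)
        · exact absurd (hno32 n3 hnw3 (by omega)) (by simp)
      · have hpn3 : ψ n3 = 3*k+4 := by rw [← h]; exact hz
        rcases hwinM with ⟨e1, e2⟩ | ⟨e1, e2⟩
        · exact absurd (hno32 n2 hnw2 (by omega)) (by simp)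
        · exact ⟨n2, n1, by omega, by omega, hnw2, hnw1⟩
    obtain ⟨y, t, hpy, hpt, hwy, hwt⟩ := hgood
    have hAylo : LAdj D w y glo := (hI.adj _ _).2 (by omega)
    have hloy : glo < y := by
      rcases lt_trichotomy y glo with h | h | h
      · exfalso
        have hD := D_of_ladj hAylo h
        rw [hwy, hwlo] at hD
        exact hnDzL hD
      · exfalso; rw [h] at hpy; omega
      · exact h
    have hymid : y < gmid := by
      rcases lt_trichotomy y gmid with h | h | h
      · exact h
      · exfalso; rw [h] at hpy; omega
      · exfalso
        have hA : LAdj D w gmid y := Or.inl ⟨h, by rw [hwmid, hwy]; exact hDLz⟩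
        have := (hI.adj _ _).1 hA
        omega
    have htlo : t < glo := by
      rcases lt_trichotomy t glo with h | h | h
      · exact h
      · exfalso; rw [h] at hpt; omega
      · exfalso
        have hA : LAdj D w glo t := Or.inl ⟨h, by rw [hwlo, hwt]; exact hDLz⟩
        have := (hI.adj _ _).1 hA
        omega
    exact ⟨w z, t, y, z, hwt, hwy, rfl, hMa, htlo.trans hloy, hymid.trans hmidz,
      (by omega), (by omega), (by omega), htlo.trans hlox1⟩
  have hmain : ∀ k, 3*k+5 < N → Pred w ψ a x1 k := by
    intro k
    induction k with
    | zero => intro _; exact hbase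
    | succ k ih => intro h; exact hstep k (ih (by omega)) (by omega)
  obtain ⟨L, glo, gmid, ghi, hwlo, -, -, hLa, -, -, -, -, hplo, hlox1⟩ :=
    hmain (r - 2) (by omega)
  have hAlox3 : LAdj D w glo x3 := (hI.adj _ _).2 (by omega)
  obtain ⟨hx2glo, -, -⟩ := nbrs3 hI h12 h23 h34 hw1 hw2 hw3 hw4 hDaa glo (ladj_symm hAlox3)
  exact absurd (hlox1.trans h12) (lt_asymm hx2glo)

end Path3r

open Path3r in
lemma not_r_letter (r : ℕ) (hr : 1 ≤ r) :
    ¬ IsKLetterGraph r (SimpleGraph.pathGraph (3 * r + 1)) := by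
  rintro ⟨n, D, w, ⟨φ⟩⟩
  have hn : 3 * r + 1 = n := by
    simpa using Fintype.card_congr φ.toEquiv
  subst hn
  have hI : Iface D w (fun x => ((φ.symm x : Fin (3*r+1)) : ℕ)) := by
    constructor
    · intro x y h
      exact φ.symm.toEquiv.injective (Fin.ext h)
    · intro x; exact (φ.symm x).isLt
    · intro m hm
      refine ⟨φ ⟨m, hm⟩, ?_⟩
      simp
    · intro x y
      calc LAdj D w x y ↔ (letterGraph D w).Adj x y := Iff.rfl
        _ ↔ (SimpleGraph.pathGraph (3*r+1)).Adj (φ.symm x) (φ.symm y) :=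
            (φ.symm.map_adj_iff).symm
        _ ↔ _ := by rw [SimpleGraph.pathGraph_adj]
  set ψ : Fin (3*r+1) → ℕ := fun x => ((φ.symm x : Fin (3*r+1)) : ℕ) with hψdef
  -- counting
  have hsum : ∑ b : Fin r, (Finset.univ.filter (fun x => w x = b)).card = 3 * r + 1 := by
    have := Finset.card_eq_sum_card_fiberwise
      (s := (Finset.univ : Finset (Fin (3*r+1)))) (t := Finset.univ) (f := w)
      (fun x _ => Finset.mem_univ _)
    simpa using this.symm
  have hle4 : ∀ b, (Finset.univ.filter (fun x => w x = b)).card ≤ 4 := by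
    intro b
    by_contra hc
    push_neg at hc
    obtain ⟨y, hy, hyw⟩ := exists_sorted (w := w) (M := b) (k := 5) (by omega)
    exact no5 hI hy hyw
  have hex4 : ∃ a, 4 ≤ (Finset.univ.filter (fun x => w x = a)).card := by
    by_contra hc
    push_neg at hc
    have hb : ∑ b : Fin r, (Finset.univ.filter (fun x => w x = b)).card ≤ 3 * r := by
      calc ∑ b : Fin r, (Finset.univ.filter (fun x => w x = b)).card
          ≤ ∑ _b : Fin r, 3 := Finset.sum_le_sum (fun b _ => by have := hc b; omega)
        _ = 3 * r := by simp [mul_comm]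
    omega
  obtain ⟨a, ha4⟩ := hex4
  have hacard : (Finset.univ.filter (fun x => w x = a)).card = 4 := le_antisymm (hle4 a) ha4
  obtain ⟨x1, x2, x3, x4, h12, h23, h34, hw1, hw2, hw3, hw4, hafib⟩ := exists_quad hacard
  have hDaa : ¬ D a a := noDll hI h12 h23 hw1 hw2 hw3
  have hle3 : ∀ b, b ≠ a → (Finset.univ.filter (fun x => w x = b)).card ≤ 3 := by
    intro b hb
    by_contra hc
    push_neg at hc
    obtain ⟨y, hy, hyw⟩ := exists_sorted (w := w) (M := b) (k := 4) (by omega)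
    have hy12 : y 0 < y 1 := hy (by decide)
    have hy23 : y 1 < y 2 := hy (by decide)
    have hy34 : y 2 < y 3 := hy (by decide)
    have hDbb : ¬ D b b := noDll hI hy12 hy23 (hyw 0) (hyw 1) (hyw 2)
    have ea2 := endpoint2 hI h12 h23 h34 hw1 hw2 hw3 hw4 hDaa
    have ea3 := endpoint3 hI h12 h23 h34 hw1 hw2 hw3 hw4 hDaa
    have eb2 := endpoint2 hI hy12 hy23 hy34 (hyw 0) (hyw 1) (hyw 2) (hyw 3) hDbb
    have eb3 := endpoint3 hI hy12 hy23 hy34 (hyw 0) (hyw 1) (hyw 2) (hyw 3) hDbb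
    have d1 : ψ x2 ≠ ψ x3 := fun h => (ne_of_lt h23) (hI.inj _ _ h)
    have d2 : ψ (y 1) ≠ ψ (y 2) := fun h => (ne_of_lt hy23) (hI.inj _ _ h)
    have d3 : ψ x2 ≠ ψ (y 1) := fun h =>
      hb (by rw [← hyw 1, hI.inj _ _ h.symm]; exact hw2)
    have d4 : ψ x2 ≠ ψ (y 2) := fun h =>
      hb (by rw [← hyw 2, hI.inj _ _ h.symm]; exact hw2)
    have d5 : ψ x3 ≠ ψ (y 1) := fun h =>
      hb (by rw [← hyw 1, hI.inj _ _ h.symm]; exact hw3)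
    have d6 : ψ x3 ≠ ψ (y 2) := fun h =>
      hb (by rw [← hyw 2, hI.inj _ _ h.symm]; exact hw3)
    rcases ea2 with h | h <;> rcases ea3 with h' | h' <;> rcases eb2 with g | g <;>
      rcases eb3 with g' | g' <;> omega
  have hall : ∀ b, b ≠ a → (Finset.univ.filter (fun x => w x = b)).card = 3 := by
    intro b hb
    rcases Nat.lt_or_ge r 2 with hr2 | hr2
    · exfalso
      have i1 := b.isLt
      have i2 := a.isLt
      exact hb (Fin.ext (by omega))
    refine le_antisymm (hle3 b hb) ?_
    by_contra hc
    push_neg at hc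
    have e1 : (Finset.univ.filter (fun x => w x = a)).card
          + ∑ c ∈ Finset.univ.erase a, (Finset.univ.filter (fun x => w x = c)).card
        = ∑ c : Fin r, (Finset.univ.filter (fun x => w x = c)).card :=
      Finset.add_sum_erase _ (fun c => (Finset.univ.filter (fun x => w x = c)).card) (Finset.mem_univ a)
    have e2 : (Finset.univ.filter (fun x => w x = b)).card
          + ∑ c ∈ ((Finset.univ : Finset (Fin r)).erase a).erase b,
              (Finset.univ.filter (fun x => w x = c)).card
        = ∑ c ∈ Finset.univ.erase a, (Finset.univ.filter (fun x => w x = c)).card :=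
      Finset.add_sum_erase _ (fun c => (Finset.univ.filter (fun x => w x = c)).card) (Finset.mem_erase.2 ⟨hb, Finset.mem_univ b⟩)
    have hcardee : (((Finset.univ : Finset (Fin r)).erase a).erase b).card = r - 2 := by
      rw [Finset.card_erase_of_mem (Finset.mem_erase.2 ⟨hb, Finset.mem_univ b⟩),
        Finset.card_erase_of_mem (Finset.mem_univ a)]
      simp only [Finset.card_univ, Fintype.card_fin]
      omega
    have hrest : ∑ c ∈ ((Finset.univ : Finset (Fin r)).erase a).erase b,
        (Finset.univ.filter (fun x => w x = c)).card ≤ 3 * (r - 2) := by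
      calc ∑ c ∈ ((Finset.univ : Finset (Fin r)).erase a).erase b,
            (Finset.univ.filter (fun x => w x = c)).card
          ≤ ∑ _c ∈ ((Finset.univ : Finset (Fin r)).erase a).erase b, 3 :=
            Finset.sum_le_sum (fun c hc' => hle3 c
              (Finset.mem_erase.1 (Finset.mem_of_mem_erase hc')).1)
        _ = 3 * (r - 2) := by rw [Finset.sum_const, hcardee]; ring
    omega
  have hr2 : 2 ≤ r := by
    by_contra hcr
    push_neg at hcr
    have hx2N := hI.lt x2
    have hex : ∃ z, LAdj D w x2 z := by
      rcases Nat.eq_zero_or_pos (ψ x2) with h0 | hpos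
      · obtain ⟨z, hz⟩ := hI.surj 1 (by omega)
        exact ⟨z, (hI.adj _ _).2 (by omega)⟩
      · obtain ⟨z, hz⟩ := hI.surj (ψ x2 - 1) (by omega)
        exact ⟨z, (hI.adj _ _).2 (by omega)⟩
    obtain ⟨z, hz⟩ := hex
    obtain ⟨-, hx2z, -⟩ := nbrs2 hI h12 h23 h34 hw1 hw2 hw3 hw4 hDaa z hz
    have hD : D a (w z) := by
      have := D_of_ladj hz hx2z
      rwa [hw2] at this
    have i1 := (w z).isLt
    have i2 := a.isLt
    have hza : w z = a := Fin.ext (by omega)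
    rw [hza] at hD
    exact hDaa hD
  rcases endpoint2 hI h12 h23 h34 hw1 hw2 hw3 hw4 hDaa with hor | hor
  · exact core0 hI hr2 rfl h12 h23 h34 hw1 hw2 hw3 hw4 hafib hall hor
  · have hI' : Iface D w (fun x => 3*r - ψ x) := by
      constructor
      · intro x y h
        have hx := hI.lt x
        have hy := hI.lt y
        exact hI.inj _ _ (by omega)
      · intro x
        have := hI.lt x
        omega
      · intro m hm
        obtain ⟨x, hx⟩ := hI.surj (3*r - m) (by omega)
        refine ⟨x, ?_⟩
        show 3*r - ψ x = m
        omega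
      · intro x y
        rw [hI.adj]
        have hx := hI.lt x
        have hy := hI.lt y
        constructor
        · rintro (h | h)
          · right; omega
          · left; omega
        · rintro (h | h)
          · right; omega
          · left; omega
    refine core0 hI' hr2 rfl h12 h23 h34 hw1 hw2 hw3 hw4 hafib hall ?_
    show 3*r - ψ x2 = 0
    omega

lemma isKLetter_self {n : ℕ} (G : SimpleGraph (Fin n)) : IsKLetterGraph n G := by
  refine ⟨n, fun i j => G.Adj i j, id, ⟨⟨Equiv.refl _, ?_⟩⟩⟩
  intro x y
  show LAdj (fun i j => G.Adj i j) id x y ↔ G.Adj x y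
  constructor
  · rintro (⟨-, h⟩ | ⟨-, h⟩)
    · exact h
    · exact h.symm
  · intro h
    rcases lt_trichotomy x y with h' | h' | h'
    · exact Or.inl ⟨h', h⟩
    · subst h'; exact absurd h (G.loopless.irrefl x)
    · exact Or.inr ⟨h', h.symm⟩

lemma isKLetter_mono {k m : ℕ} {V : Type*} {G : SimpleGraph V} (h : IsKLetterGraph k G)
    (hkm : k ≤ m) : IsKLetterGraph m G := by
  obtain ⟨n, D, w, ⟨φ⟩⟩ := h
  refine ⟨n, fun i j => ∃ i' j' : Fin k, Fin.castLE hkm i' = i ∧ Fin.castLE hkm j' = j ∧ D i' j',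
    fun x => Fin.castLE hkm (w x), ⟨φ.trans ⟨Equiv.refl _, ?_⟩⟩⟩
  intro x y
  show LAdj (fun i j => ∃ i' j' : Fin k, Fin.castLE hkm i' = i ∧ Fin.castLE hkm j' = j ∧ D i' j')
    (fun x => Fin.castLE hkm (w x)) x y ↔ LAdj D w x y
  have key : ∀ u v : Fin n,
      (∃ i' j' : Fin k, Fin.castLE hkm i' = Fin.castLE hkm (w u) ∧
        Fin.castLE hkm j' = Fin.castLE hkm (w v) ∧ D i' j') ↔ D (w u) (w v) := by
    intro u v
    constructor
    · rintro ⟨i', j', hi, hj, hD⟩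
      rwa [Fin.castLE_injective hkm hi, Fin.castLE_injective hkm hj] at hD
    · intro hD
      exact ⟨w u, w v, rfl, rfl, hD⟩
  constructor
  · rintro (⟨hlt, hD⟩ | ⟨hlt, hD⟩)
    · exact Or.inl ⟨hlt, (key x y).1 hD⟩
    · exact Or.inr ⟨hlt, (key y x).1 hD⟩
  · rintro (⟨hlt, hD⟩ | ⟨hlt, hD⟩)
    · exact Or.inl ⟨hlt, (key x y).2 hD⟩
    · exact Or.inr ⟨hlt, (key y x).2 hD⟩

/-- For every `r ≥ 1`, the path `P_{3r+1}` is not an `r`-letter graph; consequently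
`ℓ(P_{3r+1}) ≥ r + 1`. -/
theorem pathGraph_not_r_letter (r : ℕ) (hr : 1 ≤ r) :
    ¬ IsKLetterGraph r (SimpleGraph.pathGraph (3 * r + 1)) ∧
      r + 1 ≤ lettericity (SimpleGraph.pathGraph (3 * r + 1)) := by
  have key := not_r_letter r hr
  refine ⟨key, ?_⟩
  have hne : {k | IsKLetterGraph k (SimpleGraph.pathGraph (3*r+1))}.Nonempty :=
    ⟨3*r+1, isKLetter_self _⟩
  by_contra hcon
  push_neg at hcon
  rw [lettericity] at hcon
  have hmem := Nat.sInf_mem hne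
  exact key (isKLetter_mono hmem (by omega))
end

section
/- Let r ≥ 1 and suppose Γ_D(w) is a letter graph over some alphabet Σ with decoder D such that Γ_D(w) is isomorphic to rK₂, the disjoint union of r edges. Then no letter a ∈ Σ occurs at three or more positions of w; that is, every letter encodes at most 2 vertices. -/
/-- Every vertex of `matchingGraph r` has a unique neighbor. -/
lemma matchingGraph_existsUnique (r : ℕ) (i : Fin (2 * r)) :
    ∃! u, (matchingGraph r).Adj i u := by
  have hi := i.isLt
  refine ⟨⟨2 * ((i : ℕ) / 2) + (1 - (i : ℕ) % 2), by omega⟩, ⟨?_, ?_⟩, ?_⟩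
  · intro hne
    have := congrArg Fin.val hne
    simp only at this
    omega
  · simp only
    omega
  · rintro u ⟨hne, hdiv⟩
    have hne' : (u : ℕ) ≠ (i : ℕ) := fun hv => hne (Fin.ext hv.symm)
    apply Fin.ext
    simp only
    omega

/-- Every vertex of a letter graph isomorphic to `matchingGraph r` has a unique neighbor. -/
lemma letterGraph_existsUnique {α : Type*} {r n : ℕ}
    (D : α → α → Prop) (w : Fin n → α)
    (e : matchingGraph r ≃g letterGraph D w) (v : Fin n) :
    ∃! u, (letterGraph D w).Adj v u := by
  obtain ⟨m, hm, hu⟩ := matchingGraph_existsUnique r (e.symm v)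
  refine ⟨e m, ?_, ?_⟩
  · have := e.map_adj_iff (v := e.symm v) (w := m)
    rw [e.apply_symm_apply] at this
    exact this.mpr hm
  · intro u hadj
    have : (matchingGraph r).Adj (e.symm v) (e.symm u) := by
      have := e.symm.map_adj_iff (v := v) (w := u)
      exact this.mpr hadj
    have := hu _ this
    have := congrArg e this
    rwa [e.apply_symm_apply] at this

lemma no_three {α : Type*} {r n : ℕ}
    (D : α → α → Prop) (w : Fin n → α)
    (e : matchingGraph r ≃g letterGraph D w)
    {p1 p2 p3 : Fin n} (h12 : p1 < p2) (h23 : p2 < p3)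
    (e1 : w p1 = w p2) (e2 : w p2 = w p3) : False := by
  have hdeg := letterGraph_existsUnique D w e
  by_cases hD : D (w p2) (w p2)
  · -- p2 is adjacent to both p1 and p3
    have h1 : (letterGraph D w).Adj p2 p1 := Or.inr ⟨h12, by rw [e1]; exact hD⟩
    have h3 : (letterGraph D w).Adj p2 p3 := Or.inl ⟨h23, by rw [← e2]; exact hD⟩
    obtain ⟨u, -, hu⟩ := hdeg p2
    have := (hu _ h1).trans (hu _ h3).symm
    exact absurd this (h12.trans h23).ne
  · obtain ⟨q, hq, -⟩ := hdeg p2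
    rcases lt_trichotomy q p2 with hlt | heq | hgt
    · -- q < p2 : then p3 is also adjacent to q
      have hDq : D (w q) (w p2) := by
        rcases hq with ⟨h, -⟩ | ⟨-, h⟩
        · exact absurd h (asymm hlt)
        · exact h
      have h3 : (letterGraph D w).Adj q p3 :=
        Or.inl ⟨hlt.trans h23, by rw [← e2]; exact hDq⟩
      obtain ⟨u, -, hu⟩ := hdeg q
      have := (hu _ ((letterGraph D w).adj_symm hq)).trans (hu _ h3).symm
      exact absurd this h23.ne
    · subst heq
      exact (letterGraph D w).irrefl hq
    · -- p2 < q : then p1 is also adjacent to q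
      have hDq : D (w p2) (w q) := by
        rcases hq with ⟨-, h⟩ | ⟨h, -⟩
        · exact h
        · exact absurd h (asymm hgt)
      have h1 : (letterGraph D w).Adj q p1 :=
        Or.inr ⟨h12.trans hgt, by rw [e1]; exact hDq⟩
      obtain ⟨u, -, hu⟩ := hdeg q
      have := (hu _ ((letterGraph D w).adj_symm hq)).trans (hu _ h1).symm
      exact absurd this h12.ne'

/-- In any lettering of `rK₂`, no letter occurs at three or more positions of the word:
every letter encodes at most `2` vertices. -/
theorem matching_letter_encodes_at_most_two {α : Type*} {r n : ℕ} (hr : 1 ≤ r)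
    (D : α → α → Prop) (w : Fin n → α)
    (h : Nonempty (matchingGraph r ≃g letterGraph D w)) (a : α) :
    {i : Fin n | w i = a}.ncard ≤ 2 := by
  obtain ⟨e⟩ := h
  by_contra hcon
  push_neg at hcon
  obtain ⟨x, hx, y, hy, z, hz, hxy, hxz, hyz⟩ :=
    (Set.two_lt_ncard (Set.toFinite _)).mp hcon
  simp only [Set.mem_setOf_eq] at hx hy hz
  -- sort x, y, z
  rcases lt_trichotomy x y with h1 | h1 | h1
  · rcases lt_trichotomy y z with h2 | h2 | h2
    · exact no_three D w e h1 h2 (hx.trans hy.symm) (hy.trans hz.symm)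
    · exact hyz h2
    · rcases lt_trichotomy x z with h3 | h3 | h3
      · exact no_three D w e h3 h2 (hx.trans hz.symm) (hz.trans hy.symm)
      · exact hxz h3
      · exact no_three D w e h3 h1 (hz.trans hx.symm) (hx.trans hy.symm)
  · exact hxy h1
  · rcases lt_trichotomy x z with h2 | h2 | h2
    · exact no_three D w e h1 h2 (hy.trans hx.symm) (hx.trans hz.symm)
    · exact hxz h2
    · rcases lt_trichotomy y z with h3 | h3 | h3
      · exact no_three D w e h3 h2 (hy.trans hz.symm) (hz.trans hx.symm)
      · exact hyz h3
      · exact no_three D w e h3 h1 (hz.trans hy.symm) (hy.trans hx.symm)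
end

section
/- Let r ≥ 1 and suppose Γ_D(w) is a letter graph over an alphabet Σ of size exactly r with decoder D such that Γ_D(w) is isomorphic to rK₂. Then every letter a ∈ Σ occurs at exactly two positions of w, and these two positions are adjacent in Γ_D(w); that is, in every r-lettering of rK₂ each letter encodes precisely the two vertices of one edge of the matching. -/
/-- In every `r`-lettering of `rK₂` (a lettering over an alphabet of size exactly `r`),
each letter occurs at exactly two positions of the word, and these two positions are
adjacent in the letter graph: each letter encodes precisely the two vertices of one edge
of the matching. -/
theorem matching_r_lettering {α : Type*} [Fintype α] {r n : ℕ} (hr : 1 ≤ r)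
    (hcard : Fintype.card α = r) (D : α → α → Prop) (w : Fin n → α)
    (h : Nonempty (matchingGraph r ≃g letterGraph D w)) (a : α) :
    ∃ i k : Fin n, i < k ∧ {j : Fin n | w j = a} = {i, k} ∧
      (letterGraph D w).Adj i k := by

  classical
  obtain ⟨e⟩ := h
  set G := letterGraph D w with hG
  have hGadj : ∀ i j : Fin n, G.Adj i j ↔
      ((i < j ∧ D (w i) (w j)) ∨ (j < i ∧ D (w j) (w i))) := fun i j => Iff.rfl
  -- uniqueness of neighbors in the matching graph
  have muniq : ∀ v u u' : Fin (2*r), (matchingGraph r).Adj v u →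
      (matchingGraph r).Adj v u' → u = u' := by
    intro v u u' h1 h2
    obtain ⟨hne1, hd1⟩ := h1
    obtain ⟨hne2, hd2⟩ := h2
    have h1' : (v:ℕ) ≠ (u:ℕ) := fun hh => hne1 (Fin.ext hh)
    have h2' : (v:ℕ) ≠ (u':ℕ) := fun hh => hne2 (Fin.ext hh)
    exact Fin.ext (by omega)
  -- existence of neighbors in the matching graph
  have mex : ∀ v : Fin (2*r), ∃ u, (matchingGraph r).Adj v u := by
    intro v
    have hv := v.isLt
    set x : ℕ := if (v:ℕ) % 2 = 0 then (v:ℕ)+1 else (v:ℕ)-1 with hx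
    have hx1 : x < 2*r ∧ x ≠ (v:ℕ) ∧ x / 2 = (v:ℕ)/2 := by
      rw [hx]; split <;> omega
    exact ⟨⟨x, hx1.1⟩, fun hh => hx1.2.1 (congrArg Fin.val hh).symm, hx1.2.2.symm⟩
  -- transfer through the isomorphism
  have huniq : ∀ j m m' : Fin n, G.Adj j m → G.Adj j m' → m = m' := by
    intro j m m' h1 h2
    have h1' : (matchingGraph r).Adj (e.symm j) (e.symm m) := e.symm.map_adj_iff.mpr h1
    have h2' : (matchingGraph r).Adj (e.symm j) (e.symm m') := e.symm.map_adj_iff.mpr h2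
    have := muniq _ _ _ h1' h2'
    exact e.symm.toEquiv.injective this
  have hex : ∀ j : Fin n, ∃ m, G.Adj j m := by
    intro j
    obtain ⟨u, hu⟩ := mex (e.symm j)
    refine ⟨e u, ?_⟩
    have := e.map_adj_iff.mpr hu
    rwa [e.apply_symm_apply] at this
  -- key interval lemma: a neighbor of either endpoint of a nonadjacent same-letter
  -- pair lies strictly between them
  have interval : ∀ i k x m : Fin n, i < k → w i = w k → ¬ G.Adj i k →
      (x = i ∨ x = k) → G.Adj x m → i < m ∧ m < k := by
    intro i k x m hik hw hnadj hx hm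
    rcases lt_trichotomy m i with hmi | hmi | hmi
    · have hDm : D (w m) (w i) := by
        rcases hx with rfl | rfl
        · rcases hm with ⟨h1, _⟩ | ⟨_, h2⟩
          · exact (lt_asymm hmi h1).elim
          · exact h2
        · rcases hm with ⟨h1, _⟩ | ⟨_, h2⟩
          · exact (lt_asymm (hmi.trans hik) h1).elim
          · rw [hw]; exact h2
      have a1 : G.Adj m i := Or.inl ⟨hmi, hDm⟩
      have a2 : G.Adj m k := Or.inl ⟨hmi.trans hik, by rw [← hw]; exact hDm⟩
      exact absurd (huniq m i k a1 a2) (ne_of_lt hik)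
    · exfalso
      rcases hx with rfl | rfl
      · rw [hmi] at hm; exact G.loopless.irrefl _ hm
      · rw [hmi] at hm; exact hnadj hm.symm
    · rcases lt_trichotomy m k with hmk | hmk | hmk
      · exact ⟨hmi, hmk⟩
      · exfalso
        rcases hx with rfl | rfl
        · rw [hmk] at hm; exact hnadj hm
        · rw [hmk] at hm; exact G.loopless.irrefl _ hm
      · exfalso
        have hDm : D (w i) (w m) := by
          rcases hx with rfl | rfl
          · rcases hm with ⟨_, h1⟩ | ⟨h2, _⟩
            · exact h1
            · exact (lt_asymm hmi h2).elim
          · rcases hm with ⟨_, h1⟩ | ⟨h2, _⟩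
            · rw [hw]; exact h1
            · exact (lt_asymm hmk h2).elim
        have a1 : G.Adj m i := Or.inr ⟨hmi, hDm⟩
        have a2 : G.Adj m k := Or.inr ⟨hmk, by rw [← hw]; exact hDm⟩
        exact absurd (huniq m i k a1 a2) (ne_of_lt hik)
  -- no letter occurs at three positions
  have no3 : ∀ i j k : Fin n, i < j → j < k → w i = w j → w j = w k → False := by
    intro i j k hij hjk hwij hwjk
    by_cases hD : D (w i) (w i)
    · have a1 : G.Adj i j := Or.inl ⟨hij, by rw [← hwij]; exact hD⟩
      have a2 : G.Adj i k := Or.inl ⟨hij.trans hjk, by rw [← hwjk, ← hwij]; exact hD⟩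
      exact absurd (huniq i j k a1 a2) (ne_of_lt hjk)
    · have n1 : ¬ G.Adj i j := by
        rintro (⟨_, hd⟩ | ⟨hlt, _⟩)
        · rw [← hwij] at hd; exact hD hd
        · exact lt_asymm hij hlt
      have n2 : ¬ G.Adj j k := by
        rintro (⟨_, hd⟩ | ⟨hlt, _⟩)
        · rw [← hwjk, ← hwij] at hd; exact hD hd
        · exact lt_asymm hjk hlt
      obtain ⟨m, hm⟩ := hex j
      have h1 := interval i j j m hij hwij n1 (Or.inr rfl) hm
      have h2 := interval j k j m hjk hwjk n2 (Or.inl rfl) hm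
      exact lt_asymm h1.2 h2.1
  -- counting: each letter occurs exactly twice
  have hn : n = 2 * r := by
    have := Fintype.card_congr e.toEquiv
    simpa using this.symm
  have le2 : ∀ b : α, (Finset.univ.filter (fun j : Fin n => w j = b)).card ≤ 2 := by
    intro b
    by_contra hb
    push_neg at hb
    obtain ⟨x, y, z, hx, hy, hz, hxy, hxz, hyz⟩ := Finset.two_lt_card_iff.mp hb
    have hwx : w x = b := (Finset.mem_filter.mp hx).2
    have hwy : w y = b := (Finset.mem_filter.mp hy).2
    have hwz : w z = b := (Finset.mem_filter.mp hz).2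
    rcases lt_trichotomy x y with h1 | h1 | h1
    · rcases lt_trichotomy y z with h2 | h2 | h2
      · exact no3 x y z h1 h2 (hwx.trans hwy.symm) (hwy.trans hwz.symm)
      · exact hyz h2
      · rcases lt_trichotomy x z with h3 | h3 | h3
        · exact no3 x z y h3 h2 (hwx.trans hwz.symm) (hwz.trans hwy.symm)
        · exact hxz h3
        · exact no3 z x y h3 h1 (hwz.trans hwx.symm) (hwx.trans hwy.symm)
    · exact hxy h1
    · rcases lt_trichotomy x z with h2 | h2 | h2
      · exact no3 y x z h1 h2 (hwy.trans hwx.symm) (hwx.trans hwz.symm)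
      · exact hxz h2
      · rcases lt_trichotomy y z with h3 | h3 | h3
        · exact no3 y z x h3 h2 (hwy.trans hwz.symm) (hwz.trans hwx.symm)
        · exact hyz h3
        · exact no3 z y x h3 h1 (hwz.trans hwy.symm) (hwy.trans hwx.symm)
  have hsum : ∑ b : α, (Finset.univ.filter (fun j : Fin n => w j = b)).card = n := by
    have := Finset.card_eq_sum_card_fiberwise
      (f := w) (s := (Finset.univ : Finset (Fin n))) (t := (Finset.univ : Finset α))
      (fun x _ => Finset.mem_univ _)
    simpa using this.symm
  have fiber2 : ∀ b : α, (Finset.univ.filter (fun j : Fin n => w j = b)).card = 2 := by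
    intro b
    by_contra hb
    have hb1 : (Finset.univ.filter (fun j : Fin n => w j = b)).card ≤ 1 := by
      have := le2 b; omega
    have hsplit := Finset.sum_erase_add Finset.univ
      (fun c : α => (Finset.univ.filter (fun j : Fin n => w j = c)).card) (Finset.mem_univ b)
    have hle : ∑ c ∈ Finset.univ.erase b,
        (Finset.univ.filter (fun j : Fin n => w j = c)).card ≤ (Finset.univ.erase b).card * 2 := by
      have := Finset.sum_le_card_nsmul (Finset.univ.erase b)
        (fun c : α => (Finset.univ.filter (fun j : Fin n => w j = c)).card) 2
        (fun x _ => le2 x)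
      simpa [smul_eq_mul] using this
    have hcarde : (Finset.univ.erase b).card = r - 1 := by
      rw [Finset.card_erase_of_mem (Finset.mem_univ b), Finset.card_univ, hcard]
    rw [hcarde] at hle
    have hsplit' : ∑ c ∈ Finset.univ.erase b,
        (Finset.univ.filter (fun j : Fin n => w j = c)).card
        + (Finset.univ.filter (fun j : Fin n => w j = b)).card = n := by
      simpa [hsum] using hsplit
    omega
  -- each letter has exactly two positions
  have pair : ∀ b : α, ∃ i k : Fin n, i < k ∧ ∀ j : Fin n, w j = b ↔ (j = i ∨ j = k) := by
    intro b
    obtain ⟨x, y, hxy, hs⟩ := Finset.card_eq_two.mp (fiber2 b)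
    have hmem : ∀ j : Fin n, w j = b ↔ (j = x ∨ j = y) := by
      intro j
      have : j ∈ Finset.univ.filter (fun j : Fin n => w j = b) ↔
          j ∈ ({x, y} : Finset (Fin n)) := by rw [hs]
      simpa [Finset.mem_filter, Finset.mem_insert, Finset.mem_singleton] using this
    rcases lt_or_gt_of_ne hxy with hlt | hlt
    · exact ⟨x, y, hlt, hmem⟩
    · exact ⟨y, x, hlt, fun j => (hmem j).trans or_comm⟩
  obtain ⟨i0, k0, hik0, hmem0⟩ := pair a
  have hwik0 : w i0 = w k0 := ((hmem0 i0).mpr (Or.inl rfl)).trans ((hmem0 k0).mpr (Or.inr rfl)).symm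
  by_cases hadj : G.Adj i0 k0
  · refine ⟨i0, k0, hik0, ?_, hadj⟩
    ext j
    simpa using hmem0 j
  · exfalso
    set S : Finset (Fin n) :=
      Finset.univ.filter (fun y : Fin n => ∃ p, p < y ∧ w p = w y ∧ ¬ G.Adj p y) with hS
    have hne : S.Nonempty :=
      ⟨k0, Finset.mem_filter.mpr ⟨Finset.mem_univ _, i0, hik0, hwik0, hadj⟩⟩
    set y := S.max' hne with hy
    have hyS := S.max'_mem hne
    obtain ⟨p, hpy, hwpy, hnadjpy⟩ := (Finset.mem_filter.mp hyS).2
    obtain ⟨m, hm⟩ := hex y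
    have hmint : p < m ∧ m < y := interval p y y m hpy hwpy hnadjpy (Or.inr rfl) hm
    obtain ⟨p', k', hp'k', hmem'⟩ := pair (w m)
    have hmm : m = p' ∨ m = k' := (hmem' m).mp rfl
    have hwm_ne : w m ≠ w y := by
      intro hh
      exact no3 p m y hmint.1 hmint.2 (hwpy.trans hh.symm) hh
    have hwp' : w p' = w m := (hmem' p').mpr (Or.inl rfl)
    have hwk' : w k' = w m := (hmem' k').mpr (Or.inr rfl)
    have hnadj' : ¬ G.Adj p' k' := by
      intro hadj'
      rcases hmm with h | h
      · have hk'y : k' = y := huniq p' k' y hadj' (by rw [← h]; exact hm.symm)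
        exact hwm_ne (hwk'.symm.trans (congrArg w hk'y))
      · have hp'y : p' = y := huniq k' p' y hadj'.symm (by rw [← h]; exact hm.symm)
        exact hwm_ne (hwp'.symm.trans (congrArg w hp'y))
    have hwp'k' : w p' = w k' := hwp'.trans hwk'.symm
    have hyint : p' < y ∧ y < k' := by
      rcases hmm with h | h
      · exact interval p' k' p' y hp'k' hwp'k' hnadj' (Or.inl rfl) (by rw [← h]; exact hm.symm)
      · exact interval p' k' k' y hp'k' hwp'k' hnadj' (Or.inr rfl) (by rw [← h]; exact hm.symm)
    have hk'S : k' ∈ S := Finset.mem_filter.mpr ⟨Finset.mem_univ _, p', hp'k', hwp'k', hnadj'⟩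
    exact absurd (S.le_max' k' hk'S) (not_le.mpr hyint.2)
end

section
/- For every integer r ≥ 1, the lettericity of rK₂, the disjoint union of r edges, is exactly r: rK₂ is an r-letter graph, and it is not a k-letter graph for any k < r. -/
lemma letterGraph_adj_s6 {α : Type*} {n : ℕ} (D : α → α → Prop) (w : Fin n → α)
    (i j : Fin n) : (letterGraph D w).Adj i j ↔
      (i < j ∧ D (w i) (w j)) ∨ (j < i ∧ D (w j) (w i)) := Iff.rfl

lemma matchingGraph_adj (r : ℕ) (i j : Fin (2 * r)) :
    (matchingGraph r).Adj i j ↔ i ≠ j ∧ (i : ℕ) / 2 = (j : ℕ) / 2 := Iff.rfl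

/-- The word used for the upper bound. -/
def matchWord (r : ℕ) : Fin (2 * r) → Fin r := fun i =>
  if h : i.val < r then ⟨i.val, h⟩ else ⟨2 * r - 1 - i.val, by have := i.isLt; omega⟩

/-- The vertex bijection for the upper bound. -/
def matchEquiv (r : ℕ) : Fin (2 * r) ≃ Fin (2 * r) where
  toFun i := if h : i.val % 2 = 0 then ⟨i.val / 2, by have := i.isLt; omega⟩
             else ⟨2 * r - 1 - i.val / 2, by have := i.isLt; omega⟩
  invFun j := if h : j.val < r then ⟨2 * j.val, by omega⟩
              else ⟨2 * (2 * r - 1 - j.val) + 1, by have := j.isLt; omega⟩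
  left_inv i := by
    have := i.isLt
    apply Fin.ext
    by_cases h : i.val % 2 = 0 <;> simp only [h, dif_pos, dif_neg, not_false_iff] <;>
      split_ifs <;> simp <;> omega
  right_inv j := by
    have := j.isLt
    apply Fin.ext
    by_cases h : j.val < r <;> simp only [h, dif_pos, dif_neg, not_false_iff] <;>
      split_ifs <;> simp <;> omega

lemma matchWord_matchEquiv (r : ℕ) (i : Fin (2 * r)) :
    (matchWord r (matchEquiv r i)).val = i.val / 2 := by
  have := i.isLt
  by_cases h : i.val % 2 = 0 <;>
    simp only [matchWord, matchEquiv, Equiv.coe_fn_mk, h, dif_pos, dif_neg, not_false_iff] <;>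
    split_ifs <;> simp <;> omega

lemma matching_isKLetterGraph (r : ℕ) : IsKLetterGraph r (matchingGraph r) := by
  refine ⟨2 * r, Eq, matchWord r, ⟨⟨matchEquiv r, ?_⟩⟩⟩
  intro i j
  rw [letterGraph_adj_s6, matchingGraph_adj]
  have hi := matchWord_matchEquiv r i
  have hj := matchWord_matchEquiv r j
  have hne : matchEquiv r i ≠ matchEquiv r j ↔ i ≠ j :=
    not_congr (Equiv.apply_eq_iff_eq _)
  constructor
  · rintro (⟨hlt, hw⟩ | ⟨hlt, hw⟩)
    · exact ⟨hne.mp (ne_of_lt hlt), by rw [← hi, ← hj, hw]⟩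
    · exact ⟨hne.mp (ne_of_gt hlt), by rw [← hi, ← hj, hw]⟩
  · rintro ⟨hne', hdiv⟩
    have hwne : matchWord r (matchEquiv r i) = matchWord r (matchEquiv r j) :=
      Fin.ext (by rw [hi, hj, hdiv])
    rcases lt_or_gt_of_ne (hne.mpr hne') with h | h
    · exact Or.inl ⟨h, hwne⟩
    · exact Or.inr ⟨h, hwne.symm⟩

lemma matching_le_of_isKLetterGraph (r k : ℕ) (h : IsKLetterGraph k (matchingGraph r)) :
    r ≤ k := by
  by_contra hk
  push_neg at hk
  obtain ⟨n, D, w, ⟨φ⟩⟩ := h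
  -- vertices of the t-th edge
  set u : Fin r → Fin (2 * r) := fun t => ⟨2 * t.val, by have := t.isLt; omega⟩ with hu
  set v : Fin r → Fin (2 * r) := fun t => ⟨2 * t.val + 1, by have := t.isLt; omega⟩ with hv
  have key : ∀ t : Fin r, ∃ p q : Fin n, p < q ∧ D (w p) (w q) ∧
      (φ.symm p).val / 2 = t.val ∧ (φ.symm q).val / 2 = t.val := by
    intro t
    have hadj : (matchingGraph r).Adj (u t) (v t) := by
      refine ⟨?_, by simp [hu, hv]; omega⟩
      simp [hu, hv, Fin.ext_iff]
    have hadj' : (letterGraph D w).Adj (φ (u t)) (φ (v t)) :=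
      (SimpleGraph.Iso.map_adj_iff φ).mpr hadj
    have hsu : φ.symm (φ (u t)) = u t := φ.toEquiv.symm_apply_apply _
    have hsv : φ.symm (φ (v t)) = v t := φ.toEquiv.symm_apply_apply _
    have hut : (u t).val / 2 = t.val := by simp [hu]
    have hvt : (v t).val / 2 = t.val := by simp [hv]; omega
    rcases hadj' with ⟨hlt, hD⟩ | ⟨hlt, hD⟩
    · exact ⟨φ (u t), φ (v t), hlt, hD, by rw [hsu]; exact hut, by rw [hsv]; exact hvt⟩
    · exact ⟨φ (v t), φ (u t), hlt, hD, by rw [hsv]; exact hvt, by rw [hsu]; exact hut⟩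
  choose p q hpq hD hp hq using key
  -- pigeonhole on first letters
  have hcard : Fintype.card (Fin k) < Fintype.card (Fin r) := by simpa using hk
  obtain ⟨t, s, hts, hws⟩ := Fintype.exists_ne_map_eq_of_card_lt (fun t => w (p t)) hcard
  have hpne : p t ≠ p s := by
    intro hpe
    apply hts
    apply Fin.ext
    rw [← hp t, ← hp s, hpe]
  -- wlog via case split
  have main : ∀ a b : Fin r, a ≠ b → w (p a) = w (p b) → p a < p b → False := by
    intro a b hab hwab hlt
    have hadj : (letterGraph D w).Adj (p a) (q b) :=
      Or.inl ⟨lt_trans hlt (hpq b), by rw [hwab]; exact hD b⟩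
    have hadj' : (matchingGraph r).Adj (φ.symm (p a)) (φ.symm (q b)) :=
      (SimpleGraph.Iso.map_adj_iff φ.symm).mpr hadj
    have := hadj'.2
    rw [hp a, hq b] at this
    exact hab (Fin.ext this)
  rcases lt_or_gt_of_ne hpne with h | h
  · exact main t s hts hws h
  · exact main s t hts.symm hws.symm h

lemma lettericity_matchingGraph' (r : ℕ) :
    lettericity (matchingGraph r) = r ∧
      IsKLetterGraph r (matchingGraph r) ∧
      ∀ k < r, ¬ IsKLetterGraph k (matchingGraph r) := by
  have hmem : IsKLetterGraph r (matchingGraph r) := matching_isKLetterGraph r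
  have hlow : ∀ k < r, ¬ IsKLetterGraph k (matchingGraph r) := by
    intro k hk h
    exact absurd (matching_le_of_isKLetterGraph r k h) (not_le.mpr hk)
  refine ⟨le_antisymm (Nat.sInf_le hmem) ?_, hmem, hlow⟩
  refine le_csInf ⟨r, hmem⟩ ?_
  intro k hk
  by_contra hkr
  exact hlow k (not_le.mp hkr) hk

/-- For every `r ≥ 1`, the lettericity of `rK₂` is exactly `r`: it is an `r`-letter
graph, and not a `k`-letter graph for any `k < r`. -/
theorem lettericity_matchingGraph (r : ℕ) (hr : 1 ≤ r) :
    lettericity (matchingGraph r) = r ∧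
      IsKLetterGraph r (matchingGraph r) ∧
      ∀ k < r, ¬ IsKLetterGraph k (matchingGraph r) := by
  exact lettericity_matchingGraph' r
end

section
/- Let Γ_D(w) be a letter graph over alphabet Σ with decoder D such that Γ_D(w) is isomorphic to rK₂, and let a ∈ Σ with (a,a) ∉ D be a letter encoding an anticlique whose first occurrence in w is earliest among all letters encoding anticliques. If a occurs exactly twice in w, at positions i < k, then the vertex adjacent to i in Γ_D(w) cannot be encoded by a letter b ≠ a that also encodes an anticlique with both of its positions after i. (Key step in the proof that every r-lettering of rK₂ assigns each letter to the two vertices of an edge.) -/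
/-- Key step in the proof that every `r`-lettering of `rK₂` assigns each letter to the
two vertices of an edge.  Suppose `Γ_D(w) ≅ rK₂` and `a` is a letter with `(a,a) ∉ D`
(so `a` encodes an anticlique) occurring exactly twice, at positions `i < k`, whose first
occurrence is earliest among all letters encoding anticliques (no letter `b` with
`(b,b) ∉ D` occurs before position `i`).  Then no vertex `x` adjacent to `i` can be
encoded by a letter `b ≠ a` with `(b,b) ∉ D` that has (at least) two positions, all of
them after `i`. -/
theorem matching_key_step {α : Type*} {r n : ℕ} (hr : 1 ≤ r)
    (D : α → α → Prop) (w : Fin n → α)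
    (hiso : Nonempty (matchingGraph r ≃g letterGraph D w))
    (a : α) (haa : ¬ D a a) (i k : Fin n) (hik : i < k)
    (hocc : {j : Fin n | w j = a} = {i, k})
    (hearliest : ∀ b : α, ¬ D b b → ∀ j : Fin n, j < i → w j ≠ b) :
    ∀ x : Fin n, (letterGraph D w).Adj i x →
      ¬ (w x ≠ a ∧ ¬ D (w x) (w x) ∧ (∃ x' : Fin n, x' ≠ x ∧ w x' = w x) ∧
          ∀ j : Fin n, w j = w x → i < j) := by
  intro x hadj
  rintro ⟨hbxa, hbb, ⟨x', hx'x, hwx'⟩, hall⟩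
  obtain ⟨e⟩ := hiso
  have hwi : w i = a := by
    have : i ∈ {j : Fin n | w j = a} := by rw [hocc]; exact Or.inl rfl
    exact this
  have hix : i < x := hall x rfl
  have hix' : i < x' := hall x' hwx'
  have hD : D (w i) (w x) := by
    rcases hadj with ⟨_, h⟩ | ⟨h, _⟩
    · exact h
    · exact absurd h (not_lt.mpr hix.le)
  have hadj' : (letterGraph D w).Adj i x' :=
    Or.inl ⟨hix', by rw [hwx']; exact hD⟩
  have m1 : (matchingGraph r).Adj (e.symm i) (e.symm x) := e.symm.map_rel_iff.mpr hadj
  have m2 : (matchingGraph r).Adj (e.symm i) (e.symm x') := e.symm.map_rel_iff.mpr hadj'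
  obtain ⟨hne1, hdiv1⟩ := m1
  obtain ⟨hne2, hdiv2⟩ := m2
  have hv1 : ((e.symm i : Fin (2*r)) : ℕ) ≠ ((e.symm x : Fin (2*r)) : ℕ) :=
    fun h => hne1 (Fin.ext h)
  have hv2 : ((e.symm i : Fin (2*r)) : ℕ) ≠ ((e.symm x' : Fin (2*r)) : ℕ) :=
    fun h => hne2 (Fin.ext h)
  have : e.symm x = e.symm x' := Fin.ext (by omega)
  exact hx'x (e.symm.injective this).symm
end
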